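/- Let A and B be Archimedean f-algebras with unit elements e_A and e_B respectively (and point separating order duals), let T : A → B be a Markov operator, and let c ∈ A satisfy 0 ≤ c ≤ e_A. Define T_c : A → B by T_c(b) = T(cb) − T(c)T(b). Then both T + T_c and T − T_c are Markov operators from A to B. Consequently, if T is an extreme point of the convex set of Markov operators, then T(cb) = T(c)T(b) for all b ∈ A and all c with 0 ≤ c ≤ e_A. -/

import Mathlib

/-- Let `T` be a Markov operator between unital Archimedean `f`-algebras with
point separating order duals and let `0 ≤ c ≤ 1`. With
`T_c b = T (c * b) - T c * T b`, both `T + T_c` and `T - T_c` are Markov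
operators; consequently, if `T` is an extreme point of the set of Markov
operators then `T (c * b) = T c * T b` for all `b` and all `0 ≤ c ≤ 1`. -/
theorem stmt_12
    {A B : Type*}
    [Ring A] [Lattice A] [Algebra ℝ A] [CovariantClass A A (· + ·) (· ≤ ·)]
    -- A is a Riesz space (vector lattice) over ℝ
    (hsmulA : ∀ (r : ℝ) (x : A), 0 ≤ r → 0 ≤ x → 0 ≤ r • x)
    -- A is a lattice-ordered algebra
    (hmulA : ∀ x y : A, 0 ≤ x → 0 ≤ y → 0 ≤ x * y)
    -- the f-algebra condition
    (hfA : ∀ x y z : A, 0 ≤ z → x ⊓ y = 0 → (x * z) ⊓ y = 0 ∧ (z * x) ⊓ y = 0)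
    -- A is Archimedean
    (harchA : ∀ x y : A, (∀ n : ℕ, n • x ≤ y) → x ≤ 0)
    -- the order dual of A separates the points of A
    (hsepA : ∀ x : A, x ≠ 0 → ∃ f : A →ₗ[ℝ] ℝ, Monotone f ∧ f x ≠ 0)
    [Ring B] [Lattice B] [Algebra ℝ B] [CovariantClass B B (· + ·) (· ≤ ·)]
    -- B is a Riesz space (vector lattice) over ℝ
    (hsmulB : ∀ (r : ℝ) (x : B), 0 ≤ r → 0 ≤ x → 0 ≤ r • x)
    -- B is a lattice-ordered algebra
    (hmulB : ∀ x y : B, 0 ≤ x → 0 ≤ y → 0 ≤ x * y)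
    -- the f-algebra condition
    (hfB : ∀ x y z : B, 0 ≤ z → x ⊓ y = 0 → (x * z) ⊓ y = 0 ∧ (z * x) ⊓ y = 0)
    -- B is Archimedean
    (harchB : ∀ x y : B, (∀ n : ℕ, n • x ≤ y) → x ≤ 0)
    -- the order dual of B separates the points of B
    (hsepB : ∀ x : B, x ≠ 0 → ∃ f : B →ₗ[ℝ] ℝ, Monotone f ∧ f x ≠ 0)
    (T : A →ₗ[ℝ] B)
    -- T is a Markov operator
    (hTpos : ∀ a : A, 0 ≤ a → 0 ≤ T a) (hT1 : T 1 = 1)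
    (c : A) (hc0 : 0 ≤ c) (hc1 : c ≤ 1) :
    (T + (T ∘ₗ LinearMap.mulLeft ℝ c - LinearMap.mulLeft ℝ (T c) ∘ₗ T) ∈
        {S : A →ₗ[ℝ] B | (∀ a : A, 0 ≤ a → 0 ≤ S a) ∧ S 1 = 1} ∧
     T - (T ∘ₗ LinearMap.mulLeft ℝ c - LinearMap.mulLeft ℝ (T c) ∘ₗ T) ∈
        {S : A →ₗ[ℝ] B | (∀ a : A, 0 ≤ a → 0 ≤ S a) ∧ S 1 = 1}) ∧
    (T ∈ Set.extremePoints ℝ {S : A →ₗ[ℝ] B | (∀ a : A, 0 ≤ a → 0 ≤ S a) ∧ S 1 = 1} →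
      ∀ c' : A, 0 ≤ c' → c' ≤ 1 → ∀ b : A, T (c' * b) = T c' * T b) := by
  have key : ∀ c : A, 0 ≤ c → c ≤ 1 →
      (T + (T ∘ₗ LinearMap.mulLeft ℝ c - LinearMap.mulLeft ℝ (T c) ∘ₗ T) ∈
          {S : A →ₗ[ℝ] B | (∀ a : A, 0 ≤ a → 0 ≤ S a) ∧ S 1 = 1} ∧
       T - (T ∘ₗ LinearMap.mulLeft ℝ c - LinearMap.mulLeft ℝ (T c) ∘ₗ T) ∈
          {S : A →ₗ[ℝ] B | (∀ a : A, 0 ≤ a → 0 ≤ S a) ∧ S 1 = 1}) := by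
    intro c hc0 hc1
    have hTc1 : (0:B) ≤ 1 - T c := by
      have h := hTpos (1 - c) (by rwa [sub_nonneg])
      rwa [map_sub, hT1] at h
    constructor
    · constructor
      · intro a ha
        have h1 : 0 ≤ T (c * a) := hTpos _ (hmulA _ _ hc0 ha)
        have h2 : 0 ≤ (1 - T c) * T a := hmulB _ _ hTc1 (hTpos a ha)
        have h3 : T c * T a ≤ T a := by
          have := h2
          rw [sub_mul, one_mul, sub_nonneg] at this
          exact this
        simp only [LinearMap.add_apply, LinearMap.sub_apply, LinearMap.comp_apply,
          LinearMap.mulLeft_apply]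
        have h4 : 0 ≤ T a - T c * T a := by rwa [sub_nonneg]
        calc (0:B) ≤ T (c * a) := h1
          _ = T (c * a) + 0 := (add_zero _).symm
          _ ≤ T (c * a) + (T a - T c * T a) := by exact add_le_add_right h4 _
          _ = T a + (T (c * a) - T c * T a) := by abel
      · simp [hT1]
    · constructor
      · intro a ha
        have h1 : 0 ≤ T c * T a := hmulB _ _ (hTpos c hc0) (hTpos a ha)
        have h2 : T (c * a) ≤ T a := by
          have h := hTpos ((1 - c) * a) (hmulA _ _ (by rwa [sub_nonneg]) ha)
          rw [sub_mul, one_mul, map_sub, sub_nonneg] at h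
          exact h
        have h3 : 0 ≤ T a - T (c * a) := by rwa [sub_nonneg]
        simp only [LinearMap.sub_apply, LinearMap.add_apply, LinearMap.comp_apply,
          LinearMap.mulLeft_apply]
        calc (0:B) ≤ T c * T a := h1
          _ = T c * T a + 0 := (add_zero _).symm
          _ ≤ T c * T a + (T a - T (c * a)) := by exact add_le_add_right h3 _
          _ = T a - (T (c * a) - T c * T a) := by abel
      · simp [hT1]
  refine ⟨key c hc0 hc1, ?_⟩
  intro hT c' hc'0 hc'1 b
  obtain ⟨hP, hQ⟩ := key c' hc'0 hc'1
  set D := T ∘ₗ LinearMap.mulLeft ℝ c' - LinearMap.mulLeft ℝ (T c') ∘ₗ T with hD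
  have hseg : T ∈ openSegment ℝ (T + D) (T - D) := by
    refine ⟨1/2, 1/2, by norm_num, by norm_num, by norm_num, ?_⟩
    module
  have hEq : T + D = T := (hT.2 hP hQ hseg)
  have hD0 : D = 0 := by
    have := hEq
    rwa [add_eq_left] at this
  have := LinearMap.congr_fun hD0 b
  simp only [hD, LinearMap.sub_apply, LinearMap.comp_apply, LinearMap.mulLeft_apply,
    LinearMap.zero_apply, sub_eq_zero] at this
  exact this
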